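/- Let p > 2 be a prime, r ≥ 1, and let G_r be Ito's group. Then |K(G_r)| − 1 = (p^{r+1} − 1)(p^r − 1)/(p² − 1). -/

import Mathlib

open scoped Classical

namespace Paper

/-- The commutator `[x,y] = x⁻¹y⁻¹xy`. -/
def comm {G : Type*} [Group G] (x y : G) : G := x⁻¹ * y⁻¹ * x * y

/-- `K(G)`, the set of commutators in `G`. -/
def KG (G : Type*) [Group G] : Set G := {g : G | ∃ x y : G, comm x y = g}

/-- The fiber of `g` under the commutator word map. -/
def fiber {G : Type*} [Group G] (g : G) : Set (G × G) := {q : G × G | comm q.1 q.2 = g}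

/-- `Pr_g(G) = |fiber(g)| / |G|²`. -/
noncomputable def Pr (G : Type*) [Group G] (g : G) : ℚ :=
  (Nat.card (fiber g) : ℚ) / ((Nat.card G : ℚ)) ^ 2

/-- `P(G) = {Pr_g(G) : g ∈ K(G), g ≠ 1}`. -/
noncomputable def PSet (G : Type*) [Group G] : Set ℚ :=
  {q : ℚ | ∃ g ∈ KG G, g ≠ 1 ∧ Pr G g = q}

/-- The conjugacy class `g^G` of `g` in `G`. -/
def conjClass {G : Type*} [Group G] (g : G) : Set G := {h : G | ∃ x : G, x⁻¹ * g * x = h}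

/-- `G` is of conjugate type `(1, m)`: every noncentral element has conjugacy
class of size exactly `m`. -/
def IsConjugateType1 (G : Type*) [Group G] (m : ℕ) : Prop :=
  ∀ g : G, g ∉ Subgroup.center G → Nat.card (conjClass g) = m

/-- `TZ_g = {xZ(G) ∈ G/Z(G) : g ∈ [x,G]}`. -/
def TZ (G : Type*) [Group G] (g : G) : Set (G ⧸ Subgroup.center G) :=
  {xz : G ⧸ Subgroup.center G |
    ∃ x : G, (QuotientGroup.mk x : G ⧸ Subgroup.center G) = xz ∧ ∃ h : G, comm x h = g}




/-- The relations of Ito's group `G_r`: the commutators are central,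
and the generators and their commutators have order dividing `p`. -/
def itoRels (p r : ℕ) : Set (FreeGroup (Fin (r + 1))) :=
  {w : FreeGroup (Fin (r + 1)) |
    (∃ i j k : Fin (r + 1), i < j ∧
      w = comm (FreeGroup.of k) (comm (FreeGroup.of i) (FreeGroup.of j))) ∨
    (∃ i : Fin (r + 1), w = (FreeGroup.of i) ^ p) ∨
    (∃ i j : Fin (r + 1), i < j ∧ w = (comm (FreeGroup.of i) (FreeGroup.of j)) ^ p)}

/-- Ito's group `G_r`, presented on `r+1` generators. -/
abbrev ItoGroup (p r : ℕ) : Type := PresentedGroup (itoRels p r)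

/-- The generators `a_1, …, a_{r+1}` of Ito's group (0-indexed). -/
def itoGen (p r : ℕ) (i : Fin (r + 1)) : ItoGroup p r := PresentedGroup.of i


section Model

variable (p n : ℕ)

/-- Concrete model of Ito's group. -/
@[ext] structure Model where
  v : Fin n → ZMod p
  m : Fin n → Fin n → ZMod p

variable {p n}

def omat (u v : Fin n → ZMod p) : Fin n → Fin n → ZMod p :=
  fun i j => u i * v j - v i * u j

instance : Group (Model p n) where
  mul x y := ⟨x.v + y.v, x.m + y.m + fun i j => x.v i * y.v j⟩
  one := ⟨0, 0⟩
  inv x := ⟨-x.v, -x.m + fun i j => x.v i * x.v j⟩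
  mul_assoc a b c := by
    refine Model.ext ?_ ?_ <;> funext i <;> try funext j
    · show (a.v + b.v + c.v) i = (a.v + (b.v + c.v)) i; simp [add_assoc]
    · show (a.m + b.m + (fun i j => a.v i * b.v j) + c.m + fun i j => (a.v + b.v) i * c.v j) i j
        = (a.m + (b.m + c.m + fun i j => b.v i * c.v j) + fun i j => a.v i * (b.v + c.v) j) i j
      simp only [Pi.add_apply]; ring
  one_mul a := by
    refine Model.ext ?_ ?_
    · show (0 : Fin n → ZMod p) + a.v = a.v; simp
    · show (0 : Fin n → Fin n → ZMod p) + a.m + (fun i j => (0 : Fin n → ZMod p) i * a.v j) = a.m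
      funext i j; simp
  mul_one a := by
    refine Model.ext ?_ ?_
    · show a.v + (0 : Fin n → ZMod p) = a.v; simp
    · show a.m + (0 : Fin n → Fin n → ZMod p) + (fun i j => a.v i * (0 : Fin n → ZMod p) j) = a.m
      funext i j; simp
  inv_mul_cancel a := by
    refine Model.ext ?_ ?_ <;> funext i <;> try funext j
    · show (-a.v + a.v) i = (0 : Fin n → ZMod p) i; simp
    · show (-a.m + (fun i j => a.v i * a.v j) + a.m + fun i j => (-a.v) i * a.v j) i j
        = (0 : Fin n → Fin n → ZMod p) i j
      simp only [Pi.add_apply, Pi.neg_apply, Pi.zero_apply]; ring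

@[simp] lemma Model.mul_v (x y : Model p n) : (x * y).v = x.v + y.v := rfl
@[simp] lemma Model.mul_m (x y : Model p n) : (x * y).m = x.m + y.m + fun i j => x.v i * y.v j := rfl
@[simp] lemma Model.one_v : (1 : Model p n).v = 0 := rfl
@[simp] lemma Model.one_m : (1 : Model p n).m = 0 := rfl
@[simp] lemma Model.inv_v (x : Model p n) : (x⁻¹).v = -x.v := rfl
@[simp] lemma Model.inv_m (x : Model p n) : (x⁻¹).m = -x.m + fun i j => x.v i * x.v j := rfl

lemma Model.comm_eq (x y : Model p n) : comm x y = ⟨0, omat x.v y.v⟩ := by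
  refine Model.ext ?_ ?_ <;> funext i <;> try funext j
  · show (-x.v + -y.v + x.v + y.v) i = (0 : Fin n → ZMod p) i; simp
  · show _ = omat x.v y.v i j
    simp only [comm, Model.mul_m, Model.mul_v, Model.inv_m, Model.inv_v, Pi.add_apply,
      Pi.neg_apply, omat]
    ring

lemma Model.pow_eq (u : Fin n → ZMod p) (k : ℕ) :
    (⟨u, 0⟩ : Model p n) ^ k = ⟨(k : ZMod p) • u, ((k.choose 2 : ℕ) : ZMod p) • fun i j => u i * u j⟩ := by
  induction k with
  | zero => refine Model.ext ?_ ?_ <;> simp [pow_zero]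
  | succ k ih =>
    rw [pow_succ, ih]
    refine Model.ext ?_ ?_ <;> funext i <;> try funext j
    · show ((k : ZMod p) • u + u) i = ((((k+1) : ℕ) : ZMod p) • u) i
      push_cast
      simp [add_smul, add_mul]
    · show (((k.choose 2 : ℕ) : ZMod p) • (fun i j => u i * u j) + 0 + fun i j => ((k : ZMod p) • u) i * u j) i j
        = (((k+1).choose 2 : ℕ) : ZMod p) • (u i * u j)
      have hch : (k+1).choose 2 = k.choose 2 + k := by
        rw [Nat.choose_succ_succ]; simp [Nat.choose_one_right, Nat.add_comm]
      rw [hch]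
      push_cast
      simp only [Pi.add_apply, Pi.smul_apply, Pi.zero_apply, smul_eq_mul]
      ring

end Model



section Model2

variable {p n : ℕ}

@[simp] lemma omat_zero_right (u : Fin n → ZMod p) : omat u (0 : Fin n → ZMod p) = 0 := by
  funext i j; simp [omat]

@[simp] lemma omat_zero_left (u : Fin n → ZMod p) : omat (0 : Fin n → ZMod p) u = 0 := by
  funext i j; simp [omat]

lemma Model.pow_zero_v (M : Fin n → Fin n → ZMod p) (k : ℕ) :
    (⟨0, M⟩ : Model p n) ^ k = ⟨0, k • M⟩ := by
  induction k with
  | zero => refine Model.ext ?_ ?_ <;> simp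
  | succ k ih =>
    rw [pow_succ, ih]
    refine Model.ext ?_ ?_
    · show (0 : Fin n → ZMod p) + 0 = 0; simp
    · show k • M + M + (fun i j => (0 : Fin n → ZMod p) i * (0 : Fin n → ZMod p) j) = (k+1) • M
      funext i j; simp [add_smul, add_mul]

lemma choose_two_cast_zero {p : ℕ} (hp : p.Prime) (hp2 : 2 < p) :
    ((p.choose 2 : ℕ) : ZMod p) = 0 := by
  rw [ZMod.natCast_eq_zero_iff]
  exact hp.dvd_choose_self (by norm_num) hp2

end Model2

section Main

variable (p r : ℕ)

/-- basis vectors -/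
def evec (i : Fin (r+1)) : Fin (r+1) → ZMod p := Pi.single i 1

lemma ito_rels_hold (hp : p.Prime) (hp2 : 2 < p) :
    ∀ w ∈ itoRels p r, FreeGroup.lift (fun i => (⟨evec p r i, 0⟩ : Model p (r+1))) w = 1 := by
  intro w hw
  set f : Fin (r+1) → Model p (r+1) := fun i => ⟨evec p r i, 0⟩ with hf
  have hcomm : ∀ x y : FreeGroup (Fin (r+1)),
      FreeGroup.lift f (comm x y) =
        comm (FreeGroup.lift f x) (FreeGroup.lift f y) := by
    intro x y; simp [comm, map_mul, map_inv]
  rcases hw with ⟨i, j, k, hij, hw⟩ | ⟨i, hw⟩ | ⟨i, j, hij, hw⟩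
  · subst hw
    rw [hcomm, hcomm]
    simp only [FreeGroup.lift_apply_of, hf]
    rw [Model.comm_eq, Model.comm_eq]
    refine Model.ext ?_ ?_ <;> simp
  · subst hw
    rw [map_pow]
    simp only [FreeGroup.lift_apply_of, hf]
    rw [Model.pow_eq]
    refine Model.ext ?_ ?_
    · simp
    · rw [choose_two_cast_zero hp hp2]; simp
  · subst hw
    rw [map_pow, hcomm]
    simp only [FreeGroup.lift_apply_of, hf]
    rw [Model.comm_eq, Model.pow_zero_v]
    refine Model.ext ?_ ?_
    · rfl
    · show (p : ℕ) • omat (evec p r i) (evec p r j) = 0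
      funext a b
      show (p : ℕ) • (omat (evec p r i) (evec p r j) a b) = 0
      rw [nsmul_eq_mul]
      simp [ZMod.natCast_self]

/-- The homomorphism from Ito's group to the model. -/
noncomputable def phi (hp : p.Prime) (hp2 : 2 < p) : ItoGroup p r →* Model p (r+1) :=
  PresentedGroup.toGroup (ito_rels_hold p r hp hp2)

@[simp] lemma phi_gen (hp : p.Prime) (hp2 : 2 < p) (i : Fin (r+1)) :
    phi p r hp hp2 (itoGen p r i) = ⟨evec p r i, 0⟩ :=
  PresentedGroup.toGroup.of _

end Main




section GroupSide

variable {p r : ℕ}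

lemma mk_rel {w : FreeGroup (Fin (r+1))} (hw : w ∈ itoRels p r) :
    PresentedGroup.mk (itoRels p r) w = 1 :=
  (QuotientGroup.eq_one_iff w).mpr (Subgroup.subset_normalClosure hw)

lemma comm_mk (x y : FreeGroup (Fin (r+1))) :
    PresentedGroup.mk (itoRels p r) (comm x y)
      = comm (PresentedGroup.mk (itoRels p r) x) (PresentedGroup.mk (itoRels p r) y) := by
  simp [comm, map_mul, map_inv]

lemma rel1 (i j k : Fin (r+1)) (hij : i < j) :
    comm (itoGen p r k) (comm (itoGen p r i) (itoGen p r j)) = 1 := by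
  have := mk_rel (p := p) (r := r)
    (Or.inl ⟨i, j, k, hij, rfl⟩ : _ ∈ itoRels p r)
  rwa [comm_mk, comm_mk] at this

lemma rel2 (i : Fin (r+1)) : (itoGen p r i) ^ p = 1 := by
  have := mk_rel (p := p) (r := r)
    (Or.inr (Or.inl ⟨i, rfl⟩) : _ ∈ itoRels p r)
  rwa [map_pow] at this

lemma rel3 (i j : Fin (r+1)) (hij : i < j) :
    (comm (itoGen p r i) (itoGen p r j)) ^ p = 1 := by
  have := mk_rel (p := p) (r := r)
    (Or.inr (Or.inr ⟨i, j, hij, rfl⟩) : _ ∈ itoRels p r)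
  rwa [map_pow, comm_mk] at this

-- general commutator identities
lemma comm_symm {G : Type*} [Group G] (x y : G) : comm x y = (comm y x)⁻¹ := by
  simp [comm]; group

lemma comm_one_right {G : Type*} [Group G] (x : G) : comm x 1 = 1 := by simp [comm]

lemma comm_one_left {G : Type*} [Group G] (y : G) : comm 1 y = 1 := by simp [comm]

lemma comm_mul_right' {G : Type*} [Group G] (x y y' : G) :
    comm x (y * y') = comm x y' * (y'⁻¹ * comm x y * y') := by
  simp [comm]; group

lemma comm_inv_right' {G : Type*} [Group G] (x y : G) :
    comm x y⁻¹ = y * (comm x y)⁻¹ * y⁻¹ := by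
  simp [comm]; group

lemma comm_mul_left' {G : Type*} [Group G] (x x' y : G) :
    comm (x * x') y = x'⁻¹ * comm x y * x' * comm x' y := by
  simp [comm]; group

lemma comm_inv_left' {G : Type*} [Group G] (x y : G) :
    comm x⁻¹ y = x * (comm x y)⁻¹ * x⁻¹ := by
  simp [comm]; group

lemma conj_central {G : Type*} [Group G] {z : G} (hz : z ∈ Subgroup.center G) (g : G) :
    g⁻¹ * z * g = z := by
  have h := Subgroup.mem_center_iff.mp hz g
  rw [mul_assoc, ← h, ← mul_assoc, inv_mul_cancel, one_mul]

lemma conj_central' {G : Type*} [Group G] {z : G} (hz : z ∈ Subgroup.center G) (g : G) :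
    g * z * g⁻¹ = z := by
  have h := Subgroup.mem_center_iff.mp hz g
  rw [h, mul_assoc, mul_inv_cancel, mul_one]

lemma mem_center_of_gens {z : ItoGroup p r}
    (h : ∀ i, itoGen p r i * z = z * itoGen p r i) : z ∈ Subgroup.center (ItoGroup p r) := by
  rw [Subgroup.mem_center_iff]
  intro g
  have hg : g ∈ Subgroup.closure (Set.range (PresentedGroup.of : Fin (r+1) → ItoGroup p r)) := by
    rw [PresentedGroup.closure_range_of]; trivial
  induction hg using Subgroup.closure_induction with
  | mem x hx => obtain ⟨i, rfl⟩ := hx; exact h i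
  | one => simp
  | mul x y _ _ hx hy => rw [mul_assoc, hy, ← mul_assoc, hx, mul_assoc]
  | inv x _ hx =>
      have hc : Commute x z := hx
      exact hc.inv_left

lemma comm_self {G : Type*} [Group G] (x : G) : comm x x = 1 := by
  unfold comm; group

lemma gen_comm_central_lt {i j : Fin (r+1)} (h : i < j) :
    comm (itoGen p r i) (itoGen p r j) ∈ Subgroup.center (ItoGroup p r) := by
  apply mem_center_of_gens
  intro k
  have h1 := rel1 (p := p) i j k h
    -- comm a_k c = 1 means c commutes with a_k
  set c := comm (itoGen p r i) (itoGen p r j)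
  have h2 : (itoGen p r k)⁻¹ * c⁻¹ * itoGen p r k * c = 1 := h1
  calc itoGen p r k * c
      = c * itoGen p r k * ((itoGen p r k)⁻¹ * c⁻¹ * itoGen p r k * c) := by group
    _ = c * itoGen p r k := by rw [h2, mul_one]

lemma gen_comm_central (i j : Fin (r+1)) :
    comm (itoGen p r i) (itoGen p r j) ∈ Subgroup.center (ItoGroup p r) := by
  rcases lt_trichotomy i j with h | h | h
  · exact gen_comm_central_lt h
  · subst h; rw [comm_self]; exact one_mem _
  · rw [comm_symm]
    exact inv_mem (gen_comm_central_lt h)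

lemma comm_central (x y : ItoGroup p r) : comm x y ∈ Subgroup.center (ItoGroup p r) := by
  have Hgen : ∀ i : Fin (r+1), ∀ y : ItoGroup p r,
      comm (itoGen p r i) y ∈ Subgroup.center (ItoGroup p r) := by
    intro i y
    have hy : y ∈ Subgroup.closure (Set.range (PresentedGroup.of : Fin (r+1) → ItoGroup p r)) := by
      rw [PresentedGroup.closure_range_of]; trivial
    induction hy using Subgroup.closure_induction with
    | mem z hz => obtain ⟨j, rfl⟩ := hz; exact gen_comm_central i j
    | one => rw [comm_one_right]; exact one_mem _
    | mul z w _ _ hz hw =>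
        rw [comm_mul_right']
        exact mul_mem hw (by rw [conj_central hz]; exact hz)
    | inv z _ hz =>
        rw [comm_inv_right', conj_central' (inv_mem hz)]
        exact inv_mem hz
  have hx : x ∈ Subgroup.closure (Set.range (PresentedGroup.of : Fin (r+1) → ItoGroup p r)) := by
    rw [PresentedGroup.closure_range_of]; trivial
  induction hx using Subgroup.closure_induction with
  | mem z hz => obtain ⟨i, rfl⟩ := hz; exact Hgen i y
  | one => rw [comm_one_left]; exact one_mem _
  | mul z w _ _ hz hw =>
      rw [comm_mul_left']
      exact mul_mem (by rw [conj_central hz]; exact hz) hw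
  | inv z _ hz =>
      rw [comm_inv_left', conj_central' (inv_mem hz)]
      exact inv_mem hz

-- clean bilinearity
lemma comm_mul_left (x x' y : ItoGroup p r) :
    comm (x * x') y = comm x y * comm x' y := by
  rw [comm_mul_left', conj_central (comm_central x y)]

lemma comm_mul_right (x y y' : ItoGroup p r) :
    comm x (y * y') = comm x y * comm x y' := by
  rw [comm_mul_right', conj_central (comm_central x y)]
  exact Subgroup.mem_center_iff.mp (comm_central x y) (comm x y')

lemma comm_inv_left (x y : ItoGroup p r) : comm x⁻¹ y = (comm x y)⁻¹ := by
  rw [comm_inv_left', conj_central' (inv_mem (comm_central x y))]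

lemma comm_inv_right (x y : ItoGroup p r) : comm x y⁻¹ = (comm x y)⁻¹ := by
  rw [comm_inv_right', conj_central' (inv_mem (comm_central x y))]

end GroupSide



section Psi

open scoped IsMulCommutative

variable {p r : ℕ}

lemma pow_mod_helper {A : Type*} [Group A] {z : A} (hz : z ^ p = 1) (m : ℕ) :
    z ^ (m % p) = z ^ m := by
  conv_rhs => rw [← Nat.div_add_mod m p]
  rw [pow_add, pow_mul, hz, one_pow, one_mul]

lemma pow_val_add {A : Type*} [Group A] (hp : p ≠ 0) {z : A} (hz : z ^ p = 1) (a b : ZMod p) :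
    z ^ (a + b).val = z ^ a.val * z ^ b.val := by
  haveI : NeZero p := ⟨hp⟩
  rw [← pow_add, ZMod.val_add, pow_mod_helper hz]

/-- commutators of generators, as elements of the center -/
def cgen (p r : ℕ) (i j : Fin (r+1)) : Subgroup.center (ItoGroup p r) :=
  ⟨comm (itoGen p r i) (itoGen p r j), gen_comm_central i j⟩

lemma cgen_pow_p (i j : Fin (r+1)) : (cgen p r i j) ^ p = 1 := by
  rcases lt_trichotomy i j with h | h | h
  · ext; exact rel3 i j h
  · subst h; ext; show (comm _ _) ^ p = 1; rw [comm_self, one_pow]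
  · ext
    show (comm _ _) ^ p = 1
    rw [comm_symm, inv_pow, rel3 j i h, inv_one]

/-- The product map from skew matrices into the center. -/
noncomputable def Psi (p r : ℕ) (M : Fin (r+1) → Fin (r+1) → ZMod p) :
    Subgroup.center (ItoGroup p r) :=
  ∏ q : Fin (r+1) × Fin (r+1),
    if q.1 < q.2 then cgen p r q.1 q.2 ^ (M q.1 q.2).val else 1

lemma Psi_add (hp : p ≠ 0) (M N : Fin (r+1) → Fin (r+1) → ZMod p) :
    Psi p r (M + N) = Psi p r M * Psi p r N := by
  rw [Psi, Psi, Psi, ← Finset.prod_mul_distrib]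
  refine Finset.prod_congr rfl ?_
  intro q _
  by_cases h : q.1 < q.2
  · simp only [if_pos h, Pi.add_apply]
    exact pow_val_add hp (cgen_pow_p q.1 q.2) _ _
  · simp only [if_neg h, mul_one]

lemma Psi_zero : Psi p r 0 = 1 := by
  rw [Psi]
  refine Finset.prod_eq_one ?_
  intro q _
  by_cases h : q.1 < q.2
  · simp [if_pos h]
  · simp [if_neg h]

lemma Psi_neg (hp : p ≠ 0) (M : Fin (r+1) → Fin (r+1) → ZMod p) :
    Psi p r (-M) = (Psi p r M)⁻¹ := by
  have := Psi_add hp M (-M)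
  rw [add_neg_cancel, Psi_zero] at this
  rw [eq_inv_iff_mul_eq_one, ← Psi_add hp, neg_add_cancel, Psi_zero]

lemma omat_entry (u v : Fin (r+1) → ZMod p) (i j : Fin (r+1)) :
    omat u v i j = u i * v j - v i * u j := rfl

lemma Psi_omat_single (hp : p.Prime) (hp2 : 2 < p) (i j : Fin (r+1)) :
    (Psi p r (omat (evec p r i) (evec p r j)) : ItoGroup p r)
      = comm (itoGen p r i) (itoGen p r j) := by
  haveI : NeZero p := ⟨hp.ne_zero⟩
  haveI : Fact (1 < p) := ⟨by omega⟩
  have hsingle : ∀ (a k : Fin (r+1)), evec p r a k = if k = a then 1 else 0 := by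
    intro a k; rw [evec, Pi.single_apply]
  have hzero : ∀ q : Fin (r+1) × Fin (r+1), q.1 < q.2 → (q.1, q.2) ≠ (i, j) →
      ¬(q.1 = j ∧ q.2 = i ∧ j < i) →
      omat (evec p r i) (evec p r j) q.1 q.2 = 0 := by
    intro q hq hne hne2
    rw [omat_entry, hsingle, hsingle, hsingle, hsingle]
    by_cases h1 : q.1 = i <;> by_cases h2 : q.2 = j <;>
      by_cases h3 : q.1 = j <;> by_cases h4 : q.2 = i <;>
        simp_all <;> omega
  rcases lt_trichotomy i j with h | h | h
  · rw [Psi, Finset.prod_eq_single (i, j)]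
    · have hij : omat (evec p r i) (evec p r j) i j = 1 := by
        have hne : i ≠ j := Fin.ne_of_lt h
        rw [omat_entry, hsingle, hsingle, hsingle, hsingle]
        simp [hne, hne.symm]
      rw [if_pos h, hij, ZMod.val_one, pow_one]; rfl
    · intro q _ hq
      by_cases hlt : q.1 < q.2
      · rw [if_pos hlt]
        have : omat (evec p r i) (evec p r j) q.1 q.2 = 0 := by
          refine hzero q hlt ?_ ?_
          · intro hc; apply hq; rw [← hc]
          · rintro ⟨h1, h2, h3⟩; exact absurd h (by omega)
        rw [this, ZMod.val_zero, pow_zero]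
      · rw [if_neg hlt]
    · intro hmem; exact absurd (Finset.mem_univ _) hmem
  · subst h
    have : ∀ q : Fin (r+1) × Fin (r+1), q.1 < q.2 →
        omat (evec p r i) (evec p r i) q.1 q.2 = 0 := by
      intro q hq; rw [omat_entry]; ring
    have h1 : Psi p r (omat (evec p r i) (evec p r i)) = 1 := by
      rw [Psi]
      refine Finset.prod_eq_one ?_
      intro q _
      by_cases hlt : q.1 < q.2
      · rw [if_pos hlt, this q hlt, ZMod.val_zero, pow_zero]
      · rw [if_neg hlt]
    rw [comm_self, h1, OneMemClass.coe_one]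
  · -- j < i : single factor at (j, i), exponent is val (-1) = p - 1
    rw [Psi, Finset.prod_eq_single (j, i)]
    · have hji : omat (evec p r i) (evec p r j) j i = -1 := by
        rw [omat_entry, hsingle, hsingle, hsingle, hsingle]
        have : ¬ j = i := Fin.ne_of_lt h
        rw [if_neg this, if_neg (Ne.symm this)]
        simp
      rw [if_pos h, hji]
      have hcast : ((p-1 : ℕ) : ZMod p) = -1 := by
        rw [Nat.cast_sub (by omega : 1 ≤ p), ZMod.natCast_self]
        push_cast; ring
      have hval : ((-1 : ZMod p)).val = p - 1 := by
        rw [← hcast, ZMod.val_cast_of_lt (by omega)]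
      rw [hval]
      have hcp := cgen_pow_p (p := p) (r := r) j i
      have : cgen p r j i ^ (p - 1) = (cgen p r j i)⁻¹ := by
        rw [eq_inv_iff_mul_eq_one, ← pow_succ]
        have : p - 1 + 1 = p := by omega
        rw [this, hcp]
      rw [this]
      push_cast
      rw [comm_symm (itoGen p r i) (itoGen p r j)]
      rfl
    · intro q _ hq
      by_cases hlt : q.1 < q.2
      · rw [if_pos hlt]
        have : omat (evec p r i) (evec p r j) q.1 q.2 = 0 := by
          refine hzero q hlt ?_ ?_
          · intro hc
            rw [Prod.mk.injEq] at hc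
            obtain ⟨h1, h2⟩ := hc
            rw [h1, h2] at hlt
            exact absurd hlt (not_lt.mpr (le_of_lt h))
          · rintro ⟨h1, h2, _⟩
            exact hq (Prod.ext h1 h2)
        rw [this, ZMod.val_zero, pow_zero]
      · rw [if_neg hlt]
    · intro hmem; exact absurd (Finset.mem_univ _) hmem

end Psi



section LemA

variable {p r : ℕ}

lemma omat_add_left (u u' v : Fin (r+1) → ZMod p) :
    omat (u + u') v = omat u v + omat u' v := by
  funext i j; simp only [omat, Pi.add_apply]; ring

lemma omat_add_right (u v v' : Fin (r+1) → ZMod p) :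
    omat u (v + v') = omat u v + omat u v' := by
  funext i j; simp only [omat, Pi.add_apply]; ring

lemma omat_neg_left (u v : Fin (r+1) → ZMod p) : omat (-u) v = -omat u v := by
  funext i j; simp only [omat, Pi.neg_apply]; ring

lemma omat_neg_right (u v : Fin (r+1) → ZMod p) : omat u (-v) = -omat u v := by
  funext i j; simp only [omat, Pi.neg_apply]; ring

variable (hp : p.Prime) (hp2 : 2 < p)

lemma phiv_mul (x y : ItoGroup p r) :
    (phi p r hp hp2 (x * y)).v = (phi p r hp hp2 x).v + (phi p r hp hp2 y).v := by
  rw [map_mul]; rfl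

lemma phiv_inv (x : ItoGroup p r) :
    (phi p r hp hp2 x⁻¹).v = -(phi p r hp hp2 x).v := by
  rw [map_inv]; rfl

lemma phiv_one : (phi p r hp hp2 (1 : ItoGroup p r)).v = 0 := by
  rw [map_one]; rfl

lemma phiv_gen (i : Fin (r+1)) : (phi p r hp hp2 (itoGen p r i)).v = evec p r i := by
  rw [phi_gen]

/-- The key structural lemma: every commutator is `Ψ` of the wedge of the images. -/
lemma comm_eq_Psi (x y : ItoGroup p r) :
    comm x y = (Psi p r (omat ((phi p r hp hp2 x).v) ((phi p r hp hp2 y).v)) : ItoGroup p r) := by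
  have hp0 : p ≠ 0 := hp.ne_zero
  have hgen : ∀ i : Fin (r+1), ∀ y : ItoGroup p r,
      comm (itoGen p r i) y
        = (Psi p r (omat (evec p r i) ((phi p r hp hp2 y).v)) : ItoGroup p r) := by
    intro i y
    have hy : y ∈ Subgroup.closure (Set.range (PresentedGroup.of : Fin (r+1) → ItoGroup p r)) := by
      rw [PresentedGroup.closure_range_of]; trivial
    induction hy using Subgroup.closure_induction with
    | mem z hz =>
        obtain ⟨j, rfl⟩ := hz
        rw [show (PresentedGroup.of j : ItoGroup p r) = itoGen p r j from rfl,
          phiv_gen hp hp2 j]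
        exact (Psi_omat_single hp hp2 i j).symm
    | one => rw [comm_one_right, phiv_one, omat_zero_right, Psi_zero, OneMemClass.coe_one]
    | mul z w _ _ hz hw =>
        rw [comm_mul_right, hz, hw, phiv_mul hp hp2, omat_add_right, Psi_add hp0]
        rfl
    | inv z _ hz =>
        rw [comm_inv_right, hz, phiv_inv hp hp2, omat_neg_right, Psi_neg hp0]
        rfl
  have hx : x ∈ Subgroup.closure (Set.range (PresentedGroup.of : Fin (r+1) → ItoGroup p r)) := by
    rw [PresentedGroup.closure_range_of]; trivial
  induction hx using Subgroup.closure_induction with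
  | mem z hz =>
      obtain ⟨i, rfl⟩ := hz
      rw [show (PresentedGroup.of i : ItoGroup p r) = itoGen p r i from rfl,
        hgen i y, phiv_gen hp hp2 i]
  | one => rw [comm_one_left, phiv_one, omat_zero_left, Psi_zero, OneMemClass.coe_one]
  | mul z w _ _ hz hw =>
      rw [comm_mul_left, hz, hw, phiv_mul hp hp2, omat_add_left, Psi_add hp0]
      rfl
  | inv z _ hz =>
      rw [comm_inv_left, hz, phiv_inv hp hp2, omat_neg_left, Psi_neg hp0]
      rfl

lemma phi_comm (x y : ItoGroup p r) :
    phi p r hp hp2 (comm x y)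
      = ⟨0, omat ((phi p r hp hp2 x).v) ((phi p r hp hp2 y).v)⟩ := by
  have : phi p r hp hp2 (comm x y) = comm (phi p r hp hp2 x) (phi p r hp hp2 y) := by
    simp [comm, map_mul, map_inv]
  rw [this, Model.comm_eq]

/-- realize any vector as the `v`-image of a group element -/
lemma exists_phiv (u : Fin (r+1) → ZMod p) :
    ∃ x : ItoGroup p r, (phi p r hp hp2 x).v = u := by
  haveI : NeZero p := ⟨hp.ne_zero⟩
  refine ⟨(List.ofFn (fun i => itoGen p r i ^ (u i).val)).prod, ?_⟩
  have key : ∀ (l : List (ItoGroup p r)),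
      (phi p r hp hp2 l.prod).v = (l.map (fun x => (phi p r hp hp2 x).v)).sum := by
    intro l
    induction l with
    | nil => simpa using phiv_one hp hp2
    | cons a t ih => rw [List.prod_cons, phiv_mul hp hp2, ih, List.map_cons, List.sum_cons]
  rw [key, List.map_ofFn]
  have hpow : ∀ i : Fin (r+1),
      (phi p r hp hp2 (itoGen p r i ^ (u i).val)).v = Pi.single i (u i) := by
    intro i
    rw [map_pow, phi_gen, Model.pow_eq]
    show (((u i).val : ZMod p)) • evec p r i = _
    rw [ZMod.natCast_zmod_val]
    funext k
    rw [evec, Pi.smul_apply, Pi.single_apply, Pi.single_apply]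
    by_cases hk : k = i <;> simp [hk]
  have : (List.ofFn fun i => (phi p r hp hp2 (itoGen p r i ^ (u i).val)).v)
      = List.ofFn (fun i => (Pi.single i (u i) : Fin (r+1) → ZMod p)) := by
    congr 1; funext i; exact hpow i
  rw [Function.comp_def, this, List.sum_ofFn]
  funext k
  rw [Finset.sum_apply]
  simp [Pi.single_apply]

/-- decomposable matrices -/
def DSet (p r : ℕ) : Set (Fin (r+1) → Fin (r+1) → ZMod p) :=
  {M | ∃ u v : Fin (r+1) → ZMod p, omat u v = M}

lemma card_KG_eq (hp : p.Prime) (hp2 : 2 < p) :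
    Nat.card (KG (ItoGroup p r)) = Nat.card (DSet p r) := by
  refine Nat.card_eq_of_bijective
    (fun g => ⟨(phi p r hp hp2 g.1).m, ?_⟩) ⟨?_, ?_⟩
  · obtain ⟨x, y, hxy⟩ := g.2
    exact ⟨(phi p r hp hp2 x).v, (phi p r hp hp2 y).v, by rw [← hxy, phi_comm]⟩
  · rintro ⟨g, hg⟩ ⟨g', hg'⟩ hm
    simp only [Subtype.mk.injEq] at hm ⊢
    obtain ⟨x, y, rfl⟩ := hg
    obtain ⟨x', y', rfl⟩ := hg'
    have h1 := comm_eq_Psi hp hp2 x y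
    have h2 := comm_eq_Psi hp hp2 x' y'
    rw [h1, h2]
    have e1 : (phi p r hp hp2 (comm x y)).m
        = omat ((phi p r hp hp2 x).v) ((phi p r hp hp2 y).v) := by rw [phi_comm]
    have e2 : (phi p r hp hp2 (comm x' y')).m
        = omat ((phi p r hp hp2 x').v) ((phi p r hp hp2 y').v) := by rw [phi_comm]
    rw [e1, e2] at hm
    rw [hm]
  · rintro ⟨M, u, v, hM⟩
    obtain ⟨x, hx⟩ := exists_phiv hp hp2 u
    obtain ⟨y, hy⟩ := exists_phiv hp hp2 v
    refine ⟨⟨comm x y, ⟨x, y, rfl⟩⟩, ?_⟩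
    simp only [Subtype.mk.injEq]
    refine Subtype.ext ?_
    show (phi p r hp hp2 (comm x y)).m = M
    rw [phi_comm, hx, hy, hM]

end LemA






section Counting

variable {p r : ℕ} [NeZero p]

/-- for a nonzero column `(a,c)`, the solutions `(b,d)` of `a*d - c*b = 1` number `p`. -/
lemma card_line (hp : p.Prime) (ac : ZMod p × ZMod p) (h : ac ≠ 0) :
    (Finset.univ.filter fun bd : ZMod p × ZMod p =>
      ac.1 * bd.2 - ac.2 * bd.1 = 1).card = p := by
  haveI : Fact p.Prime := ⟨hp⟩
  obtain ⟨a, c⟩ := ac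
  have hac : a ≠ 0 ∨ c ≠ 0 := by
    by_contra hcon
    push_neg at hcon
    exact h (by simp [hcon.1, hcon.2, Prod.ext_iff])
  obtain ⟨b₀, d₀, hbd⟩ : ∃ b₀ d₀ : ZMod p, a * d₀ - c * b₀ = 1 := by
    rcases hac with ha | hc
    · exact ⟨0, a⁻¹, by field_simp; ring⟩
    · exact ⟨-c⁻¹, 0, by field_simp; ring⟩
  have hbij : (Finset.univ : Finset (ZMod p)).card
      = (Finset.univ.filter fun bd : ZMod p × ZMod p =>
          (a, c).1 * bd.2 - (a, c).2 * bd.1 = 1).card := by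
    refine Finset.card_bij (fun t _ => (b₀ + t * a, d₀ + t * c)) ?_ ?_ ?_
    · intro t _
      simp only [Finset.mem_filter, Finset.mem_univ, true_and]
      linear_combination hbd
    · intro t _ t' _ het
      rw [Prod.ext_iff] at het
      obtain ⟨h1, h2⟩ := het
      simp only at h1 h2
      rcases hac with ha | hc
      · have : t * a = t' * a := by linear_combination h1
        exact mul_right_cancel₀ ha this
      · have : t * c = t' * c := by linear_combination h2
        exact mul_right_cancel₀ hc this
    · intro bd hbd'
      simp only [Finset.mem_filter, Finset.mem_univ, true_and] at hbd'
      obtain ⟨b, d⟩ := bd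
      simp only at hbd'
      rcases hac with ha | hc
      · refine ⟨a⁻¹ * (b - b₀), Finset.mem_univ _, ?_⟩
        have hb : b₀ + a⁻¹ * (b - b₀) * a = b := by field_simp; ring
        have hd : d₀ + a⁻¹ * (b - b₀) * c = d := by
          have : a * (d₀ + a⁻¹ * (b - b₀) * c) = a * d := by
            field_simp
            linear_combination hbd - hbd'
          exact mul_left_cancel₀ ha this
        rw [Prod.ext_iff]; exact ⟨hb, hd⟩
      · refine ⟨c⁻¹ * (d - d₀), Finset.mem_univ _, ?_⟩
        have hd : d₀ + c⁻¹ * (d - d₀) * c = d := by field_simp; ring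
        have hb : b₀ + c⁻¹ * (d - d₀) * a = b := by
          have : c * (b₀ + c⁻¹ * (d - d₀) * a) = c * b := by
            field_simp
            linear_combination hbd' - hbd
          exact mul_left_cancel₀ hc this
        rw [Prod.ext_iff]; exact ⟨hb, hd⟩
  rw [Finset.card_univ, ZMod.card] at hbij
  exact hbij.symm

/-- the number of quadruples `((a,c),(b,d))` with `a*d - c*b = 1` is `(p² - 1)p`. -/
lemma card_det_one (hp : p.Prime) :
    (Finset.univ.filter fun t : (ZMod p × ZMod p) × ZMod p × ZMod p =>
      t.1.1 * t.2.2 - t.1.2 * t.2.1 = 1).card = (p * p - 1) * p := by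
  haveI : Fact p.Prime := ⟨hp⟩
  set S := Finset.univ.filter fun t : (ZMod p × ZMod p) × ZMod p × ZMod p =>
      t.1.1 * t.2.2 - t.1.2 * t.2.1 = 1 with hS
  have h1 : ∀ t ∈ S, t.1 ∈ (Finset.univ.erase (0 : ZMod p × ZMod p)) := by
    intro t ht
    rw [hS, Finset.mem_filter] at ht
    rw [Finset.mem_erase]
    refine ⟨?_, Finset.mem_univ _⟩
    intro h0
    rw [Prod.ext_iff] at h0
    obtain ⟨ha, hc⟩ := h0
    rw [ha, hc] at ht
    simp at ht
  calc S.card = ∑ ac ∈ Finset.univ.erase (0 : ZMod p × ZMod p),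
        (S.filter fun t => t.1 = ac).card :=
      Finset.card_eq_sum_card_fiberwise h1
    _ = ∑ _ac ∈ Finset.univ.erase (0 : ZMod p × ZMod p), p := by
        refine Finset.sum_congr rfl ?_
        intro ac hac
        have h0 : ac ≠ 0 := (Finset.mem_erase.mp hac).1
        refine Eq.trans (Finset.card_bij (fun t _ => t.2) ?_ ?_ ?_) (card_line hp ac h0)
        · intro t ht
          simp only [hS, Finset.mem_filter, Finset.mem_univ, true_and] at ht ⊢
          obtain ⟨hdet, hfst⟩ := ht
          rw [← hfst]; exact hdet
        · rintro ⟨a1, a2⟩ ha ⟨b1, b2⟩ hb hab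
          simp only [hS, Finset.mem_filter] at ha hb
          simp only at hab
          rw [Prod.ext_iff]
          exact ⟨ha.2.trans hb.2.symm, hab⟩
        · intro bd hbd
          simp only [Finset.mem_filter, Finset.mem_univ, true_and] at hbd
          refine ⟨(ac, bd), ?_, rfl⟩
          simp [hS, Finset.mem_filter, hbd]
    _ = (p * p - 1) * p := by
        rw [Finset.sum_const, Finset.card_erase_of_mem (Finset.mem_univ _),
          Finset.card_univ, Fintype.card_prod, ZMod.card, smul_eq_mul]

/-- the fiber of the commutator-matrix map over a fixed nonzero decomposable `M`. -/
lemma card_omat_fiber (hp : p.Prime) {M : Fin (r+1) → Fin (r+1) → ZMod p} (hM : M ≠ 0)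
    {u₀ v₀ : Fin (r+1) → ZMod p} (h0 : omat u₀ v₀ = M) :
    (Finset.univ.filter fun q : (Fin (r+1) → ZMod p) × (Fin (r+1) → ZMod p) =>
      omat q.1 q.2 = M).card = (p * p - 1) * p := by
  haveI : Fact p.Prime := ⟨hp⟩
  obtain ⟨i, hi⟩ := Function.ne_iff.mp hM
  obtain ⟨j, hij⟩ := Function.ne_iff.mp hi
  have hδ : M i j ≠ 0 := hij
  have h0' : ∀ k l, u₀ k * v₀ l - v₀ k * u₀ l = M k l := by
    intro k l; rw [← h0]; rfl
  have hδ' : u₀ i * v₀ j - v₀ i * u₀ j ≠ 0 := by rw [h0' i j]; exact hδ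
  rw [← card_det_one hp]
  symm
  refine Finset.card_bij
    (fun t _ => (t.1.1 • u₀ + t.1.2 • v₀, t.2.1 • u₀ + t.2.2 • v₀)) ?_ ?_ ?_
  · rintro ⟨⟨a, c⟩, b, d⟩ ht
    simp only [Finset.mem_filter, Finset.mem_univ, true_and] at ht ⊢
    funext k l
    show (a * u₀ k + c * v₀ k) * (b * u₀ l + d * v₀ l)
      - (b * u₀ k + d * v₀ k) * (a * u₀ l + c * v₀ l) = M k l
    linear_combination (u₀ k * v₀ l - v₀ k * u₀ l) * ht + h0' k l
  · rintro ⟨⟨a, c⟩, b, d⟩ _ ⟨⟨a', c'⟩, b', d'⟩ _ heq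
    rw [Prod.ext_iff] at heq
    obtain ⟨h1, h2⟩ := heq
    have e1i := congrFun h1 i
    have e1j := congrFun h1 j
    have e2i := congrFun h2 i
    have e2j := congrFun h2 j
    simp only [Pi.add_apply, Pi.smul_apply, smul_eq_mul] at e1i e1j e2i e2j
    have cancel : ∀ x y : ZMod p,
        (x - y) * (u₀ i * v₀ j - v₀ i * u₀ j) = 0 → x = y := by
      intro x y hxy
      rcases mul_eq_zero.mp hxy with h | h
      · exact sub_eq_zero.mp h
      · exact absurd h hδ'
    have ha : a = a' := cancel a a' (by linear_combination v₀ j * e1i - v₀ i * e1j)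
    have hc : c = c' := cancel c c' (by linear_combination u₀ i * e1j - u₀ j * e1i)
    have hb : b = b' := cancel b b' (by linear_combination v₀ j * e2i - v₀ i * e2j)
    have hd : d = d' := cancel d d' (by linear_combination u₀ i * e2j - u₀ j * e2i)
    simp [Prod.ext_iff, ha, hb, hc, hd]
  · rintro ⟨u, v⟩ hq
    simp only [Finset.mem_filter, Finset.mem_univ, true_and] at hq
    have hM' : ∀ k l, u k * v l - v k * u l = M k l := by
      intro k l; rw [← hq]; rfl
    refine ⟨(((u i * v₀ j - u j * v₀ i) * (M i j)⁻¹, (u₀ i * u j - u₀ j * u i) * (M i j)⁻¹),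
            ((v i * v₀ j - v j * v₀ i) * (M i j)⁻¹, (u₀ i * v j - u₀ j * v i) * (M i j)⁻¹)),
            ?_, ?_⟩
    · simp only [Finset.mem_filter, Finset.mem_univ, true_and]
      field_simp
      linear_combination (u₀ i * v₀ j - v₀ i * u₀ j) * hM' i j + M i j * h0' i j
    · have hu : ∀ k, (u i * v₀ j - u j * v₀ i) * (M i j)⁻¹ * u₀ k
          + (u₀ i * u j - u₀ j * u i) * (M i j)⁻¹ * v₀ k = u k := by
        intro k
        have hmain : (u i * v₀ j - u j * v₀ i) * u₀ k
            + (u₀ i * u j - u₀ j * u i) * v₀ k = u k * M i j := by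
          linear_combination (-(u i)) * h0' j k + u j * h0' i k
            + u i * hM' j k - u j * hM' i k + u k * hM' i j
        field_simp
        linear_combination hmain
      have hv : ∀ k, (v i * v₀ j - v j * v₀ i) * (M i j)⁻¹ * u₀ k
          + (u₀ i * v j - u₀ j * v i) * (M i j)⁻¹ * v₀ k = v k := by
        intro k
        have hmain : (v i * v₀ j - v j * v₀ i) * u₀ k
            + (u₀ i * v j - u₀ j * v i) * v₀ k = v k * M i j := by
          linear_combination (-(v i)) * h0' j k + v j * h0' i k
            + v i * hM' j k - v j * hM' i k + v k * hM' i j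
        field_simp
        linear_combination hmain
      rw [Prod.ext_iff]
      constructor
      · funext k
        show (u i * v₀ j - u j * v₀ i) * (M i j)⁻¹ * u₀ k
          + (u₀ i * u j - u₀ j * u i) * (M i j)⁻¹ * v₀ k = u k
        exact hu k
      · funext k
        show (v i * v₀ j - v j * v₀ i) * (M i j)⁻¹ * u₀ k
          + (u₀ i * v j - u₀ j * v i) * (M i j)⁻¹ * v₀ k = v k
        exact hv k

end Counting



section Assembly

variable {p r : ℕ} [NeZero p]

lemma card_omat_zero_fiber (hp : p.Prime) {u : Fin (r+1) → ZMod p} (hu : u ≠ 0) :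
    (Finset.univ.filter fun v : Fin (r+1) → ZMod p => omat u v = 0).card = p := by
  haveI : Fact p.Prime := ⟨hp⟩
  obtain ⟨k, hk⟩ := Function.ne_iff.mp hu
  have hbij : (Finset.univ : Finset (ZMod p)).card
      = (Finset.univ.filter fun v : Fin (r+1) → ZMod p => omat u v = 0).card := by
    refine Finset.card_bij (fun c _ => c • u) ?_ ?_ ?_
    · intro c _
      simp only [Finset.mem_filter, Finset.mem_univ, true_and]
      funext a b
      show u a * (c * u b) - c * u a * u b = 0
      ring
    · intro c _ c' _ hcc
      have := congrFun hcc k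
      simp only [Pi.smul_apply, smul_eq_mul] at this
      exact mul_right_cancel₀ hk this
    · intro v hv
      simp only [Finset.mem_filter, Finset.mem_univ, true_and] at hv
      refine ⟨v k * (u k)⁻¹, Finset.mem_univ _, ?_⟩
      funext l
      have hvl : u k * v l - v k * u l = 0 := congrFun (congrFun hv k) l
      show v k * (u k)⁻¹ * u l = v l
      have heq : u k * (v k * (u k)⁻¹ * u l) = u k * v l := by
        calc u k * (v k * (u k)⁻¹ * u l) = (u k * (u k)⁻¹) * (v k * u l) := by ring
          _ = v k * u l := by rw [mul_inv_cancel₀ hk, one_mul]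
          _ = u k * v l := by linear_combination -hvl
      exact mul_left_cancel₀ hk heq
  rw [Finset.card_univ, ZMod.card] at hbij
  exact hbij.symm

lemma key_count (hp : p.Prime) (hp2 : 2 < p) :
    ((Nat.card (DSet p r) : ℚ) - 1) * (((p:ℚ)^2 - 1) * p)
      = ((p:ℚ)^(r+1) - 1) * ((p:ℚ)^(r+1) - p) := by
  haveI : Fact p.Prime := ⟨hp⟩
  classical
  set n := r + 1 with hn
  set B : Finset (Fin (r+1) → Fin (r+1) → ZMod p) :=
    Finset.univ.filter (fun M => M ≠ 0 ∧ M ∈ DSet p r) with hB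
  set A : Finset ((Fin (r+1) → ZMod p) × (Fin (r+1) → ZMod p)) :=
    Finset.univ.filter (fun q => ¬ omat q.1 q.2 = 0) with hA
  set Z : Finset ((Fin (r+1) → ZMod p) × (Fin (r+1) → ZMod p)) :=
    Finset.univ.filter (fun q => omat q.1 q.2 = 0) with hZ
  -- Step 1 : Nat.card (DSet p r) = B.card + 1
  have step1 : Nat.card (DSet p r) = B.card + 1 := by
    have h1 : (DSet p r).toFinset = insert 0 B := by
      ext M
      simp only [Set.mem_toFinset, Finset.mem_insert, hB, Finset.mem_filter, Finset.mem_univ,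
        true_and]
      constructor
      · intro hM
        by_cases h0 : M = 0
        · exact Or.inl h0
        · exact Or.inr ⟨h0, hM⟩
      · rintro (rfl | ⟨_, hM⟩)
        · exact ⟨0, 0, omat_zero_left 0⟩
        · exact hM
    have h2 : (0 : Fin (r+1) → Fin (r+1) → ZMod p) ∉ B := by
      simp [hB]
    rw [Nat.card_eq_fintype_card, ← Set.toFinset_card, h1, Finset.card_insert_of_notMem h2,
      add_comm]
  -- Step 2 : A.card = B.card * ((p*p-1)*p)
  have step2 : A.card = B.card * ((p * p - 1) * p) := by
    have hmap : ∀ q ∈ A, omat q.1 q.2 ∈ B := by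
      intro q hq
      rw [hA, Finset.mem_filter] at hq
      rw [hB, Finset.mem_filter]
      exact ⟨Finset.mem_univ _, hq.2, ⟨q.1, q.2, rfl⟩⟩
    rw [Finset.card_eq_sum_card_fiberwise hmap]
    rw [Finset.sum_congr rfl (g := fun _ => (p * p - 1) * p) ?_, Finset.sum_const, smul_eq_mul]
    intro M hM
    rw [hB, Finset.mem_filter] at hM
    obtain ⟨-, hM0, u₀, v₀, h0⟩ := hM
    have : A.filter (fun q => omat q.1 q.2 = M)
        = Finset.univ.filter (fun q => omat q.1 q.2 = M) := by
      ext q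
      simp only [hA, Finset.filter_filter, Finset.mem_filter, Finset.mem_univ, true_and]
      constructor
      · exact fun h => h.2
      · intro h
        exact ⟨by rw [h]; exact hM0, h⟩
    rw [this]
    exact card_omat_fiber hp hM0 h0
  -- Step 3 : A.card + Z.card = p^(2n)
  have step3 : Z.card + A.card = p ^ n * p ^ n := by
    rw [hA, hZ]
    rw [Finset.card_filter_add_card_filter_not
      (p := fun q : (Fin (r+1) → ZMod p) × (Fin (r+1) → ZMod p) => omat q.1 q.2 = 0)]
    rw [Finset.card_univ, Fintype.card_prod, Fintype.card_fun, ZMod.card, Fintype.card_fin]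
  -- Step 4 : Z.card = p^n + (p^n - 1) * p
  have step4 : (Z.card : ℚ) = (p:ℚ)^n + ((p:ℚ)^n - 1) * p := by
    have hmap : ∀ q ∈ Z, q.1 ∈ (Finset.univ : Finset (Fin (r+1) → ZMod p)) :=
      fun q _ => Finset.mem_univ _
    have hcount : Z.card = ∑ u : Fin (r+1) → ZMod p,
        (Z.filter fun q => q.1 = u).card := Finset.card_eq_sum_card_fiberwise hmap
    have hfiber : ∀ u : Fin (r+1) → ZMod p,
        (Z.filter fun q => q.1 = u).card
          = (Finset.univ.filter fun v : Fin (r+1) → ZMod p => omat u v = 0).card := by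
      intro u
      refine Finset.card_bij (fun q _ => q.2) ?_ ?_ ?_
      · intro q hq
        simp only [hZ, Finset.filter_filter, Finset.mem_filter, Finset.mem_univ, true_and] at hq ⊢
        obtain ⟨h1, h2⟩ := hq
        rw [← h2]
        exact h1
      · rintro ⟨a1, a2⟩ ha ⟨b1, b2⟩ hb hab
        simp only [hZ, Finset.filter_filter, Finset.mem_filter] at ha hb
        simp only at hab
        rw [Prod.ext_iff]
        exact ⟨ha.2.2.trans hb.2.2.symm, hab⟩
      · intro v hv
        simp only [Finset.mem_filter, Finset.mem_univ, true_and] at hv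
        refine ⟨(u, v), ?_, rfl⟩
        simp [hZ, Finset.filter_filter, Finset.mem_filter, hv]
    have hzerofib : (Z.filter fun q => q.1 = (0 : Fin (r+1) → ZMod p)).card = p ^ n := by
      rw [hfiber 0]
      have : (Finset.univ.filter fun v : Fin (r+1) → ZMod p => omat 0 v = 0) = Finset.univ := by
        ext v; simp [omat_zero_left]
      rw [this, Finset.card_univ, Fintype.card_fun, ZMod.card, Fintype.card_fin]
    have hsplit : Z.card = p ^ n + ∑ u ∈ Finset.univ.erase (0 : Fin (r+1) → ZMod p), p := by
      rw [hcount, ← Finset.add_sum_erase _ _ (Finset.mem_univ 0), hzerofib]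
      congr 1
      refine Finset.sum_congr rfl ?_
      intro u hu
      rw [hfiber u]
      exact card_omat_zero_fiber hp (Finset.mem_erase.mp hu).1
    rw [hsplit]
    rw [Finset.sum_const, Finset.card_erase_of_mem (Finset.mem_univ _), Finset.card_univ,
      Fintype.card_fun, ZMod.card, Fintype.card_fin, smul_eq_mul]
    push_cast [Nat.cast_sub (Nat.one_le_iff_ne_zero.mpr (pow_ne_zero n hp.ne_zero))]
    rw [Nat.cast_sub (Nat.one_le_iff_ne_zero.mpr (pow_ne_zero (r + 1) hp.ne_zero)), hn]
    push_cast
    ring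
  -- combine
  have hppos : (0:ℚ) < p := by exact_mod_cast hp.pos
  have hAq : (A.card : ℚ) = (p:ℚ)^n * (p:ℚ)^n - ((p:ℚ)^n + ((p:ℚ)^n - 1) * p) := by
    have := step3
    have hq : (Z.card : ℚ) + (A.card : ℚ) = (p:ℚ)^n * (p:ℚ)^n := by exact_mod_cast this
    rw [← hq, step4]; ring
  have hBq : ((B.card : ℚ)) * (((p:ℚ) * p - 1) * p) = (A.card : ℚ) := by
    rw [step2]
    push_cast [Nat.cast_sub (Nat.one_le_iff_ne_zero.mpr (Nat.mul_ne_zero hp.ne_zero hp.ne_zero))]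
    ring
  have hD : (Nat.card (DSet p r) : ℚ) = (B.card : ℚ) + 1 := by exact_mod_cast step1
  rw [hD]
  have : ((B.card : ℚ) + 1 - 1) = (B.card : ℚ) := by ring
  rw [this]
  have expand : ((p:ℚ)^2 - 1) * p = ((p:ℚ) * p - 1) * p := by ring
  rw [expand, hBq, hAq]
  rw [hn]
  push_cast
  ring

end Assembly


/-- `|K(G_r)| − 1 = (p^{r+1} − 1)(p^r − 1)/(p² − 1)` for Ito's
group `G_r`. -/
theorem stmt9 (p r : ℕ) (hp : p.Prime) (hp2 : 2 < p) (hr : 1 ≤ r) :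
    (Nat.card (KG (ItoGroup p r)) : ℚ) - 1 =
      ((p : ℚ) ^ (r + 1) - 1) * ((p : ℚ) ^ r - 1) / ((p : ℚ) ^ 2 - 1) := by
  haveI : NeZero p := ⟨hp.ne_zero⟩
  rw [card_KG_eq hp hp2]
  have key := key_count (r := r) hp hp2
  have hp3 : (3:ℚ) ≤ (p:ℚ) := by exact_mod_cast hp2
  have h1 : ((p:ℚ)^2 - 1) ≠ 0 := by nlinarith
  have h2 : (p:ℚ) ≠ 0 := by positivity
  rw [eq_div_iff h1]
  apply mul_right_cancel₀ h2
  linear_combination key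


end Paper
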